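/- If Γ is an étale groupoid and K, L ⊆ Γ are bicompact, then the product set KL = {kl : k ∈ K, l ∈ L, s(k) = r(l)} is bicompact. -/

import Mathlib

open Filter Topology

/-- An étale groupoid: a groupoid (partial multiplication encoded via `Option`,
with inverse, source and range maps) carrying a topology making inversion and
multiplication continuous, with open source map and a basis of open slices. -/
structure EtaleGroupoid (Γ : Type*) [TopologicalSpace Γ] where
  mul : Γ → Γ → Option Γ
  inv : Γ → Γ
  s : Γ → Γ
  r : Γ → Γ
  s_unit : ∀ γ, mul γ (s γ) = some γ
  r_unit : ∀ γ, mul (r γ) γ = some γ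
  mul_isSome : ∀ a b, (mul a b).isSome ↔ s a = r b
  inv_mul : ∀ γ, mul (inv γ) γ = some (s γ)
  mul_inv : ∀ γ, mul γ (inv γ) = some (r γ)
  inv_inv : ∀ γ, inv (inv γ) = γ
  s_inv : ∀ γ, s (inv γ) = r γ
  r_inv : ∀ γ, r (inv γ) = s γ
  s_s : ∀ γ, s (s γ) = s γ
  r_s : ∀ γ, r (s γ) = s γ
  inv_s : ∀ γ, inv (s γ) = s γ
  s_r : ∀ γ, s (r γ) = r γ
  r_r : ∀ γ, r (r γ) = r γ
  inv_r : ∀ γ, inv (r γ) = r γ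
  mul_s_s : ∀ γ, mul (s γ) (s γ) = some (s γ)
  mul_r_r : ∀ γ, mul (r γ) (r γ) = some (r γ)
  s_eq_r : ∀ {a b c}, mul a b = some c → s a = r b
  s_mul : ∀ {a b c}, mul a b = some c → s c = s b
  r_mul : ∀ {a b c}, mul a b = some c → r c = r a
  inv_mul_inv : ∀ {a b c}, mul a b = some c → mul (inv b) (inv a) = some (inv c)
  mul_assoc' : ∀ {a b c p q pc}, mul a b = some p → mul b c = some q →
    mul p c = some pc → mul a q = some pc
  continuous_inv : Continuous inv
  continuous_s : Continuous s
  continuous_r : Continuous r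
  isOpenMap_s : IsOpenMap s
  continuous_mul : Continuous fun p : {p : Γ × Γ // (mul p.1 p.2).isSome} =>
    (mul p.1.1 p.1.2).get p.2
  etale : ∀ γ : Γ, ∃ O : Set Γ, IsOpen O ∧ γ ∈ O ∧ Set.InjOn s O ∧ Set.InjOn r O

variable {Γ : Type*} [TopologicalSpace Γ]

/-- The unit space `Γ⁰` of an étale groupoid. -/
def EtaleGroupoid.units (G : EtaleGroupoid Γ) : Set Γ := Set.range G.s

/-- A slice: a subset on which both the source and range maps are injective. -/
def EtaleGroupoid.IsSlice (G : EtaleGroupoid Γ) (B : Set Γ) : Prop :=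
  Set.InjOn G.s B ∧ Set.InjOn G.r B

/-- A biclosed subset: both `s[B]` and `r[B]` are closed in the unit space `Γ⁰`. -/
def EtaleGroupoid.IsBiclosed (G : EtaleGroupoid Γ) (B : Set Γ) : Prop :=
  IsClosed ((fun u : G.units => (u : Γ)) ⁻¹' (G.s '' B)) ∧
  IsClosed ((fun u : G.units => (u : Γ)) ⁻¹' (G.r '' B))

/-- A bicompact subset: a biclosed compact subset of an open slice. -/
def EtaleGroupoid.IsBicompact (G : EtaleGroupoid Γ) (B : Set Γ) : Prop :=
  IsCompact B ∧ G.IsBiclosed B ∧ ∃ O : Set Γ, IsOpen O ∧ G.IsSlice O ∧ B ⊆ O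


section Aux

variable {Γ : Type*} [TopologicalSpace Γ]

set_option linter.unusedSectionVars false

lemma auxInvFunOnApply [Nonempty Γ] {f : Γ → Γ} {O : Set Γ} (hinj : Set.InjOn f O)
    {a : Γ} (ha : a ∈ O) : Function.invFunOn f O (f a) = a :=
  hinj.leftInvOn_invFunOn ha

lemma auxInvFunOnCont [Nonempty Γ] {f : Γ → Γ} {O : Set Γ} (hfo : IsOpenMap f)
    (hO : IsOpen O) (hinj : Set.InjOn f O) :
    ContinuousOn (Function.invFunOn f O) (f '' O) := by
  rw [continuousOn_open_iff (hfo O hO)]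
  intro V hV
  have h : f '' O ∩ Function.invFunOn f O ⁻¹' V = f '' (O ∩ V) := by
    ext u
    constructor
    · rintro ⟨⟨a, ha, rfl⟩, hv⟩
      rw [Set.mem_preimage, auxInvFunOnApply hinj ha] at hv
      exact ⟨a, ⟨ha, hv⟩, rfl⟩
    · rintro ⟨a, ⟨ha, hav⟩, rfl⟩
      exact ⟨⟨a, ha, rfl⟩, by rw [Set.mem_preimage, auxInvFunOnApply hinj ha]; exact hav⟩
  rw [h]
  exact hfo _ (hO.inter hV)

end Aux

namespace EtaleGroupoid

variable {Γ : Type*} [TopologicalSpace Γ] (G : EtaleGroupoid Γ)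

lemma auxIsOpenMapInv : IsOpenMap G.inv := by
  intro U hU
  have h : G.inv '' U = G.inv ⁻¹' U := by
    ext x
    constructor
    · rintro ⟨y, hy, rfl⟩
      simpa [G.inv_inv] using hy
    · intro hx
      exact ⟨G.inv x, hx, G.inv_inv x⟩
  rw [h]
  exact hU.preimage G.continuous_inv

lemma auxIsOpenMapR : IsOpenMap G.r := by
  have h : G.r = G.s ∘ G.inv := by
    funext γ
    simp [Function.comp, G.s_inv]
  rw [h]
  exact G.isOpenMap_s.comp G.auxIsOpenMapInv

lemma auxUnitsIsOpen : IsOpen G.units := by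
  have h : G.units = G.s '' Set.univ := by
    simp [units, Set.image_univ]
  rw [h]
  exact G.isOpenMap_s _ isOpen_univ

lemma auxSMemUnits (γ : Γ) : G.s γ ∈ G.units := ⟨γ, rfl⟩

lemma auxRMemUnits (γ : Γ) : G.r γ ∈ G.units := ⟨G.inv γ, G.s_inv γ⟩

lemma auxClosedUnitsIff (T : Set Γ) :
    IsClosed ((fun u : G.units => (u : Γ)) ⁻¹' T) ↔ IsOpen (G.units \ T) := by
  constructor
  · intro h
    have h2 : IsOpen ((fun u : G.units => (u : Γ)) ⁻¹' Tᶜ) := by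
      rw [Set.preimage_compl]
      exact h.isOpen_compl
    have h3 := G.auxUnitsIsOpen.isOpenMap_subtype_val _ h2
    have h4 : Subtype.val '' ((fun u : G.units => (u : Γ)) ⁻¹' Tᶜ) = G.units \ T := by
      rw [show ((fun u : G.units => (u : Γ)) ⁻¹' Tᶜ) = (Subtype.val ⁻¹' Tᶜ) from rfl,
        Subtype.image_preimage_coe]
      rw [Set.diff_eq]
    rwa [h4] at h3
  · intro h
    have h4 : (fun u : G.units => (u : Γ)) ⁻¹' T =
        ((fun u : G.units => (u : Γ)) ⁻¹' (G.units \ T))ᶜ := by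
      ext u
      simp [u.2]
    rw [h4]
    exact (h.preimage continuous_subtype_val).isClosed_compl

lemma auxSPreimageClosed {T : Set Γ}
    (h : IsClosed ((fun u : G.units => (u : Γ)) ⁻¹' T)) : IsClosed (G.s ⁻¹' T) := by
  have hc : Continuous (fun γ : Γ => (⟨G.s γ, γ, rfl⟩ : G.units)) :=
    Continuous.subtype_mk G.continuous_s _
  have he : G.s ⁻¹' T =
      (fun γ : Γ => (⟨G.s γ, γ, rfl⟩ : G.units)) ⁻¹' ((fun u : G.units => (u : Γ)) ⁻¹' T) := rfl
  rw [he]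
  exact h.preimage hc

lemma auxMulMap (h₁ h₂ : Γ → Γ) (W : Set Γ)
    (hc1 : ContinuousOn h₁ W) (hc2 : ContinuousOn h₂ W)
    (hsome : ∀ x ∈ W, (G.mul (h₁ x) (h₂ x)).isSome) :
    ∃ m : Γ → Γ, ContinuousOn m W ∧ ∀ x ∈ W, G.mul (h₁ x) (h₂ x) = some (m x) := by
  classical
  refine ⟨fun x => if h : (G.mul (h₁ x) (h₂ x)).isSome then (G.mul (h₁ x) (h₂ x)).get h else x,
    ?_, ?_⟩
  · rw [continuousOn_iff_continuous_restrict]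
    have he : (W.restrict fun x =>
        if h : (G.mul (h₁ x) (h₂ x)).isSome then (G.mul (h₁ x) (h₂ x)).get h else x)
        = (fun p : {p : Γ × Γ // (G.mul p.1 p.2).isSome} => (G.mul p.1.1 p.1.2).get p.2) ∘
          (fun x : W => ⟨(h₁ x, h₂ x), hsome x x.2⟩) := by
      funext x
      simp only [Set.restrict_apply, Function.comp_apply]
      exact dif_pos (hsome x.1 x.2)
    change Continuous (W.restrict (fun x =>
        if h : (G.mul (h₁ x) (h₂ x)).isSome then (G.mul (h₁ x) (h₂ x)).get h else x))
    rw [he]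
    exact G.continuous_mul.comp
      (Continuous.subtype_mk ((hc1.restrict).prodMk (hc2.restrict)) _)
  · intro x hx
    simp only
    rw [dif_pos (hsome x hx), Option.some_get]

lemma auxCancel {k l c : Γ} (h : G.mul k l = some c) : G.mul (G.inv k) c = some l := by
  have h1 : G.mul (G.s k) l = some l := by
    rw [G.s_eq_r h]
    exact G.r_unit l
  exact G.mul_assoc' (G.inv_mul k) h h1

lemma auxUncancel {k l c : Γ} (h : G.mul (G.inv k) c = some l) : G.mul k l = some c := by
  have hrk : G.r k = G.r c := by
    rw [← G.s_inv k]
    exact G.s_eq_r h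
  have h1 : G.mul (G.r k) c = some c := by
    rw [hrk]
    exact G.r_unit c
  exact G.mul_assoc' (G.mul_inv k) h h1

end EtaleGroupoid

/-- If `K` and `L` are bicompact subsets of an étale groupoid, so is `KL`. -/
theorem stmt7 (G : EtaleGroupoid Γ) (K L : Set Γ)
    (hK : G.IsBicompact K) (hL : G.IsBicompact L) :
    G.IsBicompact {c | ∃ k ∈ K, ∃ l ∈ L, G.mul k l = some c} := by
  classical
  obtain ⟨hKc, ⟨hKsb, hKrb⟩, OK, hOK, ⟨hOKs, hOKr⟩, hKO⟩ := hK
  obtain ⟨hLc, ⟨hLsb, hLrb⟩, OL, hOL, ⟨hOLs, hOLr⟩, hLO⟩ := hL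
  cases isEmpty_or_nonempty Γ with
  | inl hemp =>
    have hcl : ∀ T : Set Γ, IsClosed ((fun u : G.units => (u : Γ)) ⁻¹' T) := by
      intro T
      have hE : IsEmpty G.units := ⟨fun u => IsEmpty.false (u : Γ)⟩
      rw [Set.eq_empty_of_isEmpty ((fun u : G.units => (u : Γ)) ⁻¹' T)]
      exact isClosed_empty
    refine ⟨?_, ⟨hcl _, hcl _⟩, ∅, isOpen_empty,
      ⟨Set.injOn_empty _, Set.injOn_empty _⟩, ?_⟩
    · rw [Set.eq_empty_of_isEmpty {c | ∃ k ∈ K, ∃ l ∈ L, G.mul k l = some c}]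
      exact isCompact_empty
    · rw [Set.eq_empty_of_isEmpty {c | ∃ k ∈ K, ∃ l ∈ L, G.mul k l = some c}]
  | inr hne =>
    -- ρL : partial inverse of r on OL ; ρK : partial inverse of r on OK ;
    -- σL : partial inverse of s on OL
    have hrOL : IsOpen (G.r '' OL) := G.auxIsOpenMapR _ hOL
    have hρLc : ContinuousOn (Function.invFunOn G.r OL) (G.r '' OL) :=
      auxInvFunOnCont G.auxIsOpenMapR hOL hOLr
    have hρLa : ∀ a ∈ OL, Function.invFunOn G.r OL (G.r a) = a := fun a ha =>
      auxInvFunOnApply hOLr ha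
    have hrOK : IsOpen (G.r '' OK) := G.auxIsOpenMapR _ hOK
    have hρKc : ContinuousOn (Function.invFunOn G.r OK) (G.r '' OK) :=
      auxInvFunOnCont G.auxIsOpenMapR hOK hOKr
    have hρKa : ∀ a ∈ OK, Function.invFunOn G.r OK (G.r a) = a := fun a ha =>
      auxInvFunOnApply hOKr ha
    have hσLc : ContinuousOn (Function.invFunOn G.s OL) (G.s '' OL) :=
      auxInvFunOnCont G.isOpenMap_s hOL hOLs
    have hσLa : ∀ a ∈ OL, Function.invFunOn G.s OL (G.s a) = a := fun a ha =>
      auxInvFunOnApply hOLs ha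
    -- ####  Compactness  ####
    have hW1 : IsOpen (G.s ⁻¹' (G.r '' OL)) := hrOL.preimage G.continuous_s
    have hc2 : ContinuousOn (fun x => Function.invFunOn G.r OL (G.s x))
        (G.s ⁻¹' (G.r '' OL)) :=
      hρLc.comp G.continuous_s.continuousOn (fun x hx => hx)
    have hsome1 : ∀ x ∈ G.s ⁻¹' (G.r '' OL),
        (G.mul x (Function.invFunOn G.r OL (G.s x))).isSome := by
      intro x hx
      rw [G.mul_isSome]
      obtain ⟨a, ha, hae⟩ := hx
      rw [← hae, hρLa a ha]
    obtain ⟨m1, hm1c, hm1⟩ :=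
      G.auxMulMap _ _ (G.s ⁻¹' (G.r '' OL)) continuousOn_id hc2 hsome1
    simp only [id_eq] at hm1
    have hK'c : IsCompact (K ∩ G.s ⁻¹' (G.r '' L)) :=
      hKc.inter_right (G.auxSPreimageClosed hLrb)
    have hK'W : K ∩ G.s ⁻¹' (G.r '' L) ⊆ G.s ⁻¹' (G.r '' OL) := fun x hx =>
      Set.image_mono (f := G.r) hLO hx.2
    have hKLeq : {c | ∃ k ∈ K, ∃ l ∈ L, G.mul k l = some c}
        = m1 '' (K ∩ G.s ⁻¹' (G.r '' L)) := by
      ext c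
      constructor
      · rintro ⟨k, hk, l, hl, hmul⟩
        have hkK' : k ∈ K ∩ G.s ⁻¹' (G.r '' L) := ⟨hk, ⟨l, hl, (G.s_eq_r hmul).symm⟩⟩
        have hm := hm1 k (hK'W hkK')
        have hρ : Function.invFunOn G.r OL (G.s k) = l := by
          rw [G.s_eq_r hmul, hρLa l (hLO hl)]
        rw [hρ, hmul] at hm
        exact ⟨k, hkK', (Option.some_injective _ hm).symm⟩
      · rintro ⟨k, ⟨hk, l, hl, hrl⟩, rfl⟩
        have hρ : Function.invFunOn G.r OL (G.s k) = l := by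
          rw [← hrl, hρLa l (hLO hl)]
        have hm := hm1 k (hK'W ⟨hk, ⟨l, hl, hrl⟩⟩)
        rw [hρ] at hm
        exact ⟨k, hk, l, hl, hm⟩
    have hKLcompact : IsCompact {c | ∃ k ∈ K, ∃ l ∈ L, G.mul k l = some c} := by
      rw [hKLeq]
      exact hK'c.image_of_continuousOn (hm1c.mono hK'W)
    -- ####  Open slice  ####
    have hW2 : IsOpen (G.r ⁻¹' (G.r '' OK)) := hrOK.preimage G.continuous_r
    have hc1' : ContinuousOn (fun c => G.inv (Function.invFunOn G.r OK (G.r c)))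
        (G.r ⁻¹' (G.r '' OK)) :=
      G.continuous_inv.comp_continuousOn
        (hρKc.comp G.continuous_r.continuousOn (fun x hx => hx))
    have hsome2 : ∀ x ∈ G.r ⁻¹' (G.r '' OK),
        (G.mul (G.inv (Function.invFunOn G.r OK (G.r x))) x).isSome := by
      intro x hx
      rw [G.mul_isSome, G.s_inv]
      obtain ⟨a, ha, hae⟩ := hx
      rw [← hae, hρKa a ha]
    obtain ⟨m2, hm2c, hm2⟩ :=
      G.auxMulMap _ _ (G.r ⁻¹' (G.r '' OK)) hc1' continuousOn_id hsome2
    simp only [id_eq] at hm2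
    have hOopen : IsOpen (G.r ⁻¹' (G.r '' OK) ∩ m2 ⁻¹' OL) :=
      hm2c.isOpen_inter_preimage hW2 hOL
    have hOchar : ∀ c, c ∈ G.r ⁻¹' (G.r '' OK) ∩ m2 ⁻¹' OL ↔
        ∃ k ∈ OK, ∃ l ∈ OL, G.mul k l = some c := by
      intro c
      constructor
      · rintro ⟨hcW, hcm⟩
        obtain ⟨a, ha, hae⟩ := hcW
        have hρ : Function.invFunOn G.r OK (G.r c) = a := by rw [← hae, hρKa a ha]
        have hm := hm2 c ⟨a, ha, hae⟩
        rw [hρ] at hm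
        exact ⟨a, ha, m2 c, hcm, G.auxUncancel hm⟩
      · rintro ⟨k, hk, l, hl, hmul⟩
        have hcW : c ∈ G.r ⁻¹' (G.r '' OK) := ⟨k, hk, (G.r_mul hmul).symm⟩
        have hρ : Function.invFunOn G.r OK (G.r c) = k := by
          rw [G.r_mul hmul, hρKa k hk]
        have hm := hm2 c hcW
        rw [hρ] at hm
        have hml : m2 c = l := Option.some_injective _ (hm.symm.trans (G.auxCancel hmul))
        exact ⟨hcW, by rw [Set.mem_preimage, hml]; exact hl⟩
    have hOslice : G.IsSlice (G.r ⁻¹' (G.r '' OK) ∩ m2 ⁻¹' OL) := by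
      constructor
      · intro c1 hc1m c2 hc2m hs
        obtain ⟨k1, hk1, l1, hl1, hmul1⟩ := (hOchar c1).1 hc1m
        obtain ⟨k2, hk2, l2, hl2, hmul2⟩ := (hOchar c2).1 hc2m
        have hsl : G.s l1 = G.s l2 := by
          rw [← G.s_mul hmul1, ← G.s_mul hmul2]; exact hs
        have hl12 : l1 = l2 := hOLs hl1 hl2 hsl
        have hsk : G.s k1 = G.s k2 := by
          rw [G.s_eq_r hmul1, G.s_eq_r hmul2, hl12]
        have hk12 : k1 = k2 := hOKs hk1 hk2 hsk
        have hsome : some c1 = some c2 := by rw [← hmul1, ← hmul2, hk12, hl12]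
        exact Option.some_injective _ hsome
      · intro c1 hc1m c2 hc2m hr
        obtain ⟨k1, hk1, l1, hl1, hmul1⟩ := (hOchar c1).1 hc1m
        obtain ⟨k2, hk2, l2, hl2, hmul2⟩ := (hOchar c2).1 hc2m
        have hrk : G.r k1 = G.r k2 := by
          rw [← G.r_mul hmul1, ← G.r_mul hmul2]; exact hr
        have hk12 : k1 = k2 := hOKr hk1 hk2 hrk
        have hrl : G.r l1 = G.r l2 := by
          rw [← G.s_eq_r hmul1, ← G.s_eq_r hmul2, hk12]
        have hl12 : l1 = l2 := hOLr hl1 hl2 hrl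
        have hsome : some c1 = some c2 := by rw [← hmul1, ← hmul2, hk12, hl12]
        exact Option.some_injective _ hsome
    have hKLO : {c | ∃ k ∈ K, ∃ l ∈ L, G.mul k l = some c}
        ⊆ G.r ⁻¹' (G.r '' OK) ∩ m2 ⁻¹' OL := by
      rintro c ⟨k, hk, l, hl, hmul⟩
      exact (hOchar c).2 ⟨k, hKO hk, l, hLO hl, hmul⟩
    -- ####  Biclosedness  ####
    have hopenKs : IsOpen (G.units \ G.s '' K) := (G.auxClosedUnitsIff _).1 hKsb
    have hopenLs : IsOpen (G.units \ G.s '' L) := (G.auxClosedUnitsIff _).1 hLsb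
    have hopenKr : IsOpen (G.units \ G.r '' K) := (G.auxClosedUnitsIff _).1 hKrb
    have hopenLr : IsOpen (G.units \ G.r '' L) := (G.auxClosedUnitsIff _).1 hLrb
    -- s-part
    have hsKL : G.s '' {c | ∃ k ∈ K, ∃ l ∈ L, G.mul k l = some c}
        = G.s '' (L ∩ G.r ⁻¹' (G.s '' K)) := by
      ext u
      constructor
      · rintro ⟨c, ⟨k, hk, l, hl, hmul⟩, rfl⟩
        exact ⟨l, ⟨hl, ⟨k, hk, G.s_eq_r hmul⟩⟩, (G.s_mul hmul).symm⟩
      · rintro ⟨l, ⟨hl, k, hk, hsk⟩, rfl⟩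
        obtain ⟨c, hc⟩ := Option.isSome_iff_exists.1 ((G.mul_isSome k l).2 hsk)
        exact ⟨c, ⟨k, hk, l, hl, hc⟩, G.s_mul hc⟩
    have hUcharS : G.units \ G.s '' (L ∩ G.r ⁻¹' (G.s '' K)) = (G.units \ G.s '' L) ∪
        (G.s '' OL ∩ (fun u => G.r (Function.invFunOn G.s OL u)) ⁻¹' (G.units \ G.s '' K)) := by
      ext u
      constructor
      · rintro ⟨hu, hnot⟩
        by_cases hsl : u ∈ G.s '' L
        · right
          obtain ⟨l, hl, rfl⟩ := hsl
          refine ⟨⟨l, hLO hl, rfl⟩, ?_⟩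
          rw [Set.mem_preimage, hσLa l (hLO hl)]
          exact ⟨G.auxRMemUnits l, fun hrl => hnot ⟨l, ⟨hl, hrl⟩, rfl⟩⟩
        · exact Or.inl ⟨hu, hsl⟩
      · rintro (⟨hu, hnsl⟩ | ⟨⟨l0, hl0, rfl⟩, hτ⟩)
        · exact ⟨hu, fun ⟨l, hl', heq⟩ => hnsl ⟨l, hl'.1, heq⟩⟩
        · refine ⟨G.auxSMemUnits l0, ?_⟩
          rintro ⟨l, ⟨hl, hrlK⟩, heq⟩
          rw [Set.mem_preimage, hσLa l0 hl0] at hτ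
          have hll0 : l = l0 := hOLs (hLO hl) hl0 heq
          exact hτ.2 (by rw [← hll0]; exact hrlK)
    have hopen2s : IsOpen (G.s '' OL ∩
        (fun u => G.r (Function.invFunOn G.s OL u)) ⁻¹' (G.units \ G.s '' K)) :=
      ContinuousOn.isOpen_inter_preimage
        (G.continuous_r.comp_continuousOn hσLc) (G.isOpenMap_s _ hOL) hopenKs
    have hbicS : IsClosed ((fun u : G.units => (u : Γ)) ⁻¹'
        (G.s '' {c | ∃ k ∈ K, ∃ l ∈ L, G.mul k l = some c})) := by
      rw [G.auxClosedUnitsIff, hsKL, hUcharS]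
      exact hopenLs.union hopen2s
    -- r-part
    have hrKL : G.r '' {c | ∃ k ∈ K, ∃ l ∈ L, G.mul k l = some c}
        = G.r '' (K ∩ G.s ⁻¹' (G.r '' L)) := by
      ext u
      constructor
      · rintro ⟨c, ⟨k, hk, l, hl, hmul⟩, rfl⟩
        exact ⟨k, ⟨hk, ⟨l, hl, (G.s_eq_r hmul).symm⟩⟩, (G.r_mul hmul).symm⟩
      · rintro ⟨k, ⟨hk, l, hl, hrl⟩, rfl⟩
        obtain ⟨c, hc⟩ := Option.isSome_iff_exists.1 ((G.mul_isSome k l).2 hrl.symm)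
        exact ⟨c, ⟨k, hk, l, hl, hc⟩, G.r_mul hc⟩
    have hUcharR : G.units \ G.r '' (K ∩ G.s ⁻¹' (G.r '' L)) = (G.units \ G.r '' K) ∪
        (G.r '' OK ∩ (fun u => G.s (Function.invFunOn G.r OK u)) ⁻¹' (G.units \ G.r '' L)) := by
      ext u
      constructor
      · rintro ⟨hu, hnot⟩
        by_cases hrk : u ∈ G.r '' K
        · right
          obtain ⟨k, hk, rfl⟩ := hrk
          refine ⟨⟨k, hKO hk, rfl⟩, ?_⟩
          rw [Set.mem_preimage, hρKa k (hKO hk)]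
          exact ⟨G.auxSMemUnits k, fun hsk => hnot ⟨k, ⟨hk, hsk⟩, rfl⟩⟩
        · exact Or.inl ⟨hu, hrk⟩
      · rintro (⟨hu, hnrk⟩ | ⟨⟨k0, hk0, rfl⟩, hτ⟩)
        · exact ⟨hu, fun ⟨k, hk', heq⟩ => hnrk ⟨k, hk'.1, heq⟩⟩
        · refine ⟨G.auxRMemUnits k0, ?_⟩
          rintro ⟨k, ⟨hk, hskL⟩, heq⟩
          rw [Set.mem_preimage, hρKa k0 hk0] at hτ
          have hkk0 : k = k0 := hOKr (hKO hk) hk0 heq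
          exact hτ.2 (by rw [← hkk0]; exact hskL)
    have hopen2r : IsOpen (G.r '' OK ∩
        (fun u => G.s (Function.invFunOn G.r OK u)) ⁻¹' (G.units \ G.r '' L)) :=
      ContinuousOn.isOpen_inter_preimage
        (G.continuous_s.comp_continuousOn hρKc) hrOK hopenLr
    have hbicR : IsClosed ((fun u : G.units => (u : Γ)) ⁻¹'
        (G.r '' {c | ∃ k ∈ K, ∃ l ∈ L, G.mul k l = some c})) := by
      rw [G.auxClosedUnitsIff, hrKL, hUcharR]
      exact hopenKr.union hopen2r
    exact ⟨hKLcompact, ⟨hbicS, hbicR⟩, _, hOopen, hOslice, hKLO⟩
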